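/- arXiv:2602.08618 — 2 statements merged into one kernel-verified Lean document; each statement's English description precedes it below -/
import Mathlib

section
/- Let f : ℝ^n → ℝ be L-smooth convex for some L > 0, and let (x, z) be a solution of the NAG ODE with parameter r = 2 and initial point x₀. Then for every w ∈ ℝ^n and every t > 0, g(x(t)) ≤ g(w) + 2‖w − x₀‖²/t². Consequently, g(x(t)) → inf_{x ∈ ℝ^n} g(x) as t → ∞ (including the case inf g = −∞). -/
open scoped InnerProductSpace
open Filter Topology

/-- Legendre–Fenchel conjugate of `f`, valued in `ℝ ∪ {∞}` (modeled in `EReal`). -/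
noncomputable def fconj {n : ℕ} (f : EuclideanSpace ℝ (Fin n) → ℝ)
    (p : EuclideanSpace ℝ (Fin n)) : EReal :=
  ⨆ x : EuclideanSpace ℝ (Fin n), ((⟪p, x⟫_ℝ - f x : ℝ) : EReal)

/-- Effective domain `dom f*` of the Legendre–Fenchel conjugate. -/
noncomputable def fconjDom {n : ℕ} (f : EuclideanSpace ℝ (Fin n) → ℝ) :
    Set (EuclideanSpace ℝ (Fin n)) := {p | fconj f p < ⊤}

/-- Dual divergence `D_f(x, p) = f x + f*(p) − ⟨p, x⟩` (meaningful for `p ∈ dom f*`). -/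
noncomputable def dualDiv {n : ℕ} (f : EuclideanSpace ℝ (Fin n) → ℝ)
    (x p : EuclideanSpace ℝ (Fin n)) : ℝ :=
  f x + (fconj f p).toReal - ⟪p, x⟫_ℝ

/-- `f` is `L`-smooth convex: convex, differentiable, with `L`-Lipschitz gradient. -/
def LSmoothConvex {n : ℕ} (L : ℝ) (f : EuclideanSpace ℝ (Fin n) → ℝ) : Prop :=
  ConvexOn ℝ Set.univ f ∧ Differentiable ℝ f ∧
    LipschitzWith (Real.toNNReal L) (fun x => gradient f x)

lemma my_grad_ineq {n : ℕ} {f : EuclideanSpace ℝ (Fin n) → ℝ}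
    (hc : ConvexOn ℝ Set.univ f) (hd : Differentiable ℝ f)
    (a b : EuclideanSpace ℝ (Fin n)) :
    f a + ⟪gradient f a, b - a⟫_ℝ ≤ f b := by
  set φ : ℝ → ℝ := fun s => f (s • (b - a) + a) with hφ
  have hγ : HasDerivAt (fun s : ℝ => s • (b - a) + a) (b - a) (0 : ℝ) := by
    simpa using ((hasDerivAt_id (0:ℝ)).smul_const (b - a)).add_const a
  have hd' : HasDerivAt φ ⟪gradient f a, b - a⟫_ℝ 0 := by
    have h := ((hd ((0:ℝ) • (b - a) + a)).hasGradientAt.hasFDerivAt).comp_hasDerivAt 0 hγ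
    simp only [zero_smul, zero_add] at h
    simpa [InnerProductSpace.toDual_apply_apply, hφ, Function.comp_def] using h
  have hconv : ConvexOn ℝ Set.univ φ := by
    have h := hc.comp_affineMap (AffineMap.lineMap a b)
    have : φ = f ∘ (AffineMap.lineMap a b) := by
      funext s
      simp [hφ, AffineMap.lineMap_apply]
    rw [this]
    simpa using h
  have hs := hconv.le_slope_of_hasDerivAt (Set.mem_univ 0) (Set.mem_univ 1) zero_lt_one hd'
  have : slope φ 0 1 = f b - f a := by
    simp [slope_def_field, hφ]
  rw [this] at hs
  linarith

lemma my_grad_mem_dom {n : ℕ} {f : EuclideanSpace ℝ (Fin n) → ℝ}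
    (hc : ConvexOn ℝ Set.univ f) (hd : Differentiable ℝ f)
    (a : EuclideanSpace ℝ (Fin n)) : gradient f a ∈ fconjDom f := by
  have : fconj f (gradient f a) ≤ ((⟪gradient f a, a⟫_ℝ - f a : ℝ) : EReal) := by
    refine iSup_le fun y => ?_
    rw [EReal.coe_le_coe_iff]
    have := my_grad_ineq hc hd a y
    rw [inner_sub_right] at this
    linarith
  exact lt_of_le_of_lt this (EReal.coe_lt_top _)

lemma my_dom_convex {n : ℕ} {f : EuclideanSpace ℝ (Fin n) → ℝ} :
    Convex ℝ (fconjDom f) := by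
  rintro p hp q hq a b ha hb hab
  have hbd : ∀ s ∈ fconjDom f, ∀ y, ⟪s, y⟫_ℝ - f y ≤ (fconj f s).toReal := by
    intro s hs y
    have hbot : ((⟪s, y⟫_ℝ - f y : ℝ) : EReal) ≤ fconj f s := by
      exact le_iSup (fun x : EuclideanSpace ℝ (Fin n) => ((⟪s, x⟫_ℝ - f x : ℝ) : EReal)) y
    have hne : fconj f s ≠ ⊤ := hs.ne
    have hnb : fconj f s ≠ ⊥ := by
      intro h; rw [h] at hbot
      exact EReal.coe_ne_bot _ (le_bot_iff.1 hbot)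
    have := EReal.coe_toReal hne hnb
    rw [← this, EReal.coe_le_coe_iff] at hbot
    exact hbot
  have : fconj f (a • p + b • q) ≤
      ((a * (fconj f p).toReal + b * (fconj f q).toReal : ℝ) : EReal) := by
    refine iSup_le fun y => ?_
    rw [EReal.coe_le_coe_iff]
    have h1 := hbd p hp y
    have h2 := hbd q hq y
    have hin : ⟪a • p + b • q, y⟫_ℝ = a * ⟪p, y⟫_ℝ + b * ⟪q, y⟫_ℝ := by
      rw [inner_add_left, real_inner_smul_left, real_inner_smul_left]
    rw [hin]
    have e1 := mul_le_mul_of_nonneg_left h1 ha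
    have e2 := mul_le_mul_of_nonneg_left h2 hb
    have hfy : a * f y + b * f y = f y := by linear_combination (f y) * hab
    nlinarith [e1, e2]
  exact lt_of_le_of_lt this (EReal.coe_lt_top _)

lemma my_proj_ineq {n : ℕ} {f : EuclideanSpace ℝ (Fin n) → ℝ}
    {pstar q : EuclideanSpace ℝ (Fin n)}
    (hps : pstar ∈ closure (fconjDom f))
    (hmin : ∀ r ∈ closure (fconjDom f), ‖pstar‖ ≤ ‖r‖)
    (hq : q ∈ closure (fconjDom f)) :
    ‖pstar‖ ^ 2 ≤ ⟪pstar, q⟫_ℝ := by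
  have hC : Convex ℝ (closure (fconjDom f)) := my_dom_convex.closure
  have key : 0 ≤ ⟪pstar, q - pstar⟫_ℝ := by
    by_contra hneg
    push_neg at hneg
    set A : ℝ := ⟪pstar, q - pstar⟫_ℝ with hA
    set B : ℝ := ‖q - pstar‖ ^ 2 with hB
    have hBpos : 0 ≤ B := by positivity
    have hstep : ∀ θ : ℝ, 0 < θ → θ ≤ 1 → 0 ≤ 2 * A + θ * B := by
      intro θ hθ0 hθ1
      have hm : pstar + θ • (q - pstar) ∈ closure (fconjDom f) :=
        hC.add_smul_sub_mem hps hq ⟨hθ0.le, hθ1⟩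
      have hle := hmin _ hm
      have hsq : ‖pstar‖ ^ 2 ≤ ‖pstar + θ • (q - pstar)‖ ^ 2 := by
        have := norm_nonneg pstar
        nlinarith
      have hexp : ‖pstar + θ • (q - pstar)‖ ^ 2 =
          ‖pstar‖ ^ 2 + 2 * (θ * A) + θ ^ 2 * B := by
        rw [norm_add_sq_real, real_inner_smul_right, norm_smul]
        simp [hA, hB, abs_of_pos hθ0]
        ring
      rw [hexp] at hsq
      nlinarith
    rcases le_or_gt B 0 with hB0 | hB0
    · have := hstep 1 zero_lt_one le_rfl
      nlinarith
    · set θ := min 1 (-A / B) with hθ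
      have hθ0 : 0 < θ := lt_min zero_lt_one (div_pos (by linarith) hB0)
      have hθ1 : θ ≤ 1 := min_le_left _ _
      have h2 : θ * B ≤ -A := by
        have : θ ≤ -A / B := min_le_right _ _
        calc θ * B ≤ (-A / B) * B := by nlinarith
        _ = -A := by field_simp
      have := hstep θ hθ0 hθ1
      nlinarith
  rw [inner_sub_right, real_inner_self_eq_norm_sq] at key
  linarith

open scoped InnerProductSpace
open Filter Topology

section Main

variable {n : ℕ} {f : EuclideanSpace ℝ (Fin n) → ℝ}

theorem my_energy {L : ℝ}
    (hf : ConvexOn ℝ Set.univ f ∧ Differentiable ℝ f ∧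
      LipschitzWith (Real.toNNReal L) (fun x => gradient f x))
    (x₀ : EuclideanSpace ℝ (Fin n))
    (x z x' z' : ℝ → EuclideanSpace ℝ (Fin n))
    (hx : ∀ t ∈ Set.Ici (0 : ℝ), HasDerivWithinAt x (x' t) (Set.Ici 0) t)
    (hz : ∀ t ∈ Set.Ici (0 : ℝ), HasDerivWithinAt z (z' t) (Set.Ici 0) t)
    (hx0 : x 0 = x₀) (hz0 : z 0 = x₀)
    (hode1 : ∀ t > (0 : ℝ), x' t = ((2 : ℝ) / t) • (z t - x t))
    (hode2 : ∀ t > (0 : ℝ), z' t = -((t / 2) • gradient f (x t)))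
    (pstar : EuclideanSpace ℝ (Fin n))
    (hproj : ∀ s : ℝ, ‖pstar‖ ^ 2 ≤ ⟪pstar, gradient f (x s)⟫_ℝ) :
    ∀ w, ∀ t > (0 : ℝ),
      f (x t) - ⟪pstar, x t⟫_ℝ ≤
        (f w - ⟪pstar, w⟫_ℝ) + 2 * ‖w - x₀‖ ^ 2 / t ^ 2 := by
  obtain ⟨hc, hd, -⟩ := hf
  intro w t ht
  set u : ℝ → EuclideanSpace ℝ (Fin n) := fun s => z s + (s ^ 2 / 4) • pstar - w with hu
  set Cw : ℝ := f w - ⟪pstar, w⟫_ℝ with hCw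
  set E : ℝ → ℝ := fun s =>
    s ^ 2 / 2 * (f (x s) - ⟪pstar, x s⟫_ℝ - Cw) + ‖u s‖ ^ 2 with hE
  set E' : ℝ → ℝ := fun s =>
    (s * (f (x s) - ⟪pstar, x s⟫_ℝ - Cw) +
      s ^ 2 / 2 * (⟪gradient f (x s), x' s⟫_ℝ - ⟪pstar, x' s⟫_ℝ)) +
      2 * ⟪u s, z' s + (s / 2) • pstar⟫_ℝ with hE'
  -- derivative of E
  have hEderiv : ∀ s ∈ Set.Ici (0 : ℝ), HasDerivWithinAt E (E' s) (Set.Ici 0) s := by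
    intro s hs
    have hA : HasDerivWithinAt (fun r : ℝ => r ^ 2 / 2) s (Set.Ici 0) s := by
      have := ((hasDerivAt_pow 2 s).div_const 2).hasDerivWithinAt (s := Set.Ici (0:ℝ))
      simpa using this
    have hfx : HasDerivWithinAt (fun r => f (x r)) ⟪gradient f (x s), x' s⟫_ℝ
        (Set.Ici 0) s := by
      have h := ((hd (x s)).hasGradientAt.hasFDerivAt).comp_hasDerivWithinAt s (hx s hs)
      simpa [InnerProductSpace.toDual_apply_apply, Function.comp_def] using h
    have hpx : HasDerivWithinAt (fun r => ⟪pstar, x r⟫_ℝ) ⟪pstar, x' s⟫_ℝ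
        (Set.Ici 0) s := by
      have h := (hasDerivWithinAt_const s (Set.Ici (0:ℝ)) pstar).inner ℝ (hx s hs)
      simpa using h
    have hG : HasDerivWithinAt (fun r => f (x r) - ⟪pstar, x r⟫_ℝ - Cw)
        (⟪gradient f (x s), x' s⟫_ℝ - ⟪pstar, x' s⟫_ℝ) (Set.Ici 0) s :=
      (hfx.sub hpx).sub_const Cw
    have hsm : HasDerivWithinAt (fun r : ℝ => (r ^ 2 / 4) • pstar) ((s / 2) • pstar)
        (Set.Ici 0) s := by
      have := (((hasDerivAt_pow 2 s).div_const 4).hasDerivWithinAt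
        (s := Set.Ici (0:ℝ))).smul_const pstar
      exact this.congr_deriv (by congr 1; norm_num <;> ring)
    have hu' : HasDerivWithinAt u (z' s + (s / 2) • pstar) (Set.Ici 0) s :=
      ((hz s hs).add hsm).sub_const w
    have hN : HasDerivWithinAt (fun r => ‖u r‖ ^ 2)
        (2 * ⟪u s, z' s + (s / 2) • pstar⟫_ℝ) (Set.Ici 0) s := hu'.norm_sq
    exact (hA.mul hG).add hN
  -- E' is nonpositive on (0, ∞)
  have hE'nonpos : ∀ s ∈ Set.Ioi (0 : ℝ), E' s ≤ 0 := by
    intro s hs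
    have hs0 : (0 : ℝ) < s := hs
    set p : EuclideanSpace ℝ (Fin n) := gradient f (x s) with hp
    have hkey1 : f (x s) + (⟪p, w⟫_ℝ - ⟪p, x s⟫_ℝ) ≤ f w := by
      have := my_grad_ineq hc hd (x s) w
      rwa [inner_sub_right] at this
    have hkey2 : ‖pstar‖ ^ 2 ≤ ⟪pstar, p⟫_ℝ := hproj s
    have hEe : E' s = s * ((f (x s) - f w) + (⟪p, w⟫_ℝ - ⟪p, x s⟫_ℝ)) -
        s ^ 3 / 4 * (⟪pstar, p⟫_ℝ - ‖pstar‖ ^ 2) := by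
      rw [hE']
      simp only [hode1 s hs0, hode2 s hs0, hu, hCw]
      simp only [inner_add_left, inner_add_right, inner_sub_left, inner_sub_right,
        inner_neg_left, inner_neg_right, real_inner_smul_left, real_inner_smul_right,
        real_inner_comm, real_inner_self_eq_norm_sq]
      field_simp
      ring
    rw [hEe]
    have h1 : s * ((f (x s) - f w) + (⟪p, w⟫_ℝ - ⟪p, x s⟫_ℝ)) ≤ 0 := by
      have hX : (f (x s) - f w) + (⟪p, w⟫_ℝ - ⟪p, x s⟫_ℝ) ≤ 0 := by linarith
      nlinarith
    have h2 : 0 ≤ s ^ 3 / 4 * (⟪pstar, p⟫_ℝ - ‖pstar‖ ^ 2) := by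
      apply mul_nonneg (by positivity)
      linarith
    linarith
  -- E is antitone on [0, ∞)
  have hcont : ContinuousOn E (Set.Ici 0) := fun s hs =>
    (hEderiv s hs).continuousWithinAt
  have hant : AntitoneOn E (Set.Ici 0) := by
    apply antitoneOn_of_deriv_nonpos (convex_Ici 0) hcont
    · intro s hs
      rw [interior_Ici] at hs
      exact ((hEderiv s (Set.mem_Ici.2 (le_of_lt hs))).hasDerivAt (Ici_mem_nhds hs)).differentiableAt
        |>.differentiableWithinAt
    · intro s hs
      rw [interior_Ici] at hs
      rw [((hEderiv s (Set.mem_Ici.2 (le_of_lt hs))).hasDerivAt (Ici_mem_nhds hs)).deriv]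
      exact hE'nonpos s hs
  have hE0 : E 0 = ‖w - x₀‖ ^ 2 := by
    simp [hE, hu, hz0, norm_sub_rev]
  have hEt : E t ≤ ‖w - x₀‖ ^ 2 := by
    rw [← hE0]
    exact hant (Set.self_mem_Ici) (Set.mem_Ici.2 (le_of_lt ht)) (le_of_lt ht)
  have hlow : t ^ 2 / 2 * (f (x t) - ⟪pstar, x t⟫_ℝ - Cw) ≤ E t := by
    have : (0:ℝ) ≤ ‖u t‖ ^ 2 := by positivity
    simp only [hE]
    linarith
  have ht2 : (0:ℝ) < t ^ 2 := by positivity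
  have : f (x t) - ⟪pstar, x t⟫_ℝ - Cw ≤ 2 * ‖w - x₀‖ ^ 2 / t ^ 2 := by
    rw [le_div_iff₀ ht2]
    nlinarith [hlow.trans hEt, sq_nonneg ‖u t‖]
  linarith

end Main

/-- for a solution `(x, z)` of the NAG ODE with `r = 2`,
`g(x(t)) ≤ g(w) + 2‖w − x₀‖²/t²` for every `w` and `t > 0`; consequently
`g(x(t)) → inf g` as `t → ∞` (in `EReal`, covering `inf g = −∞`). -/
theorem stmt13 {n : ℕ} (hn : 1 ≤ n) (L : ℝ) (hL : 0 < L)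
    (f : EuclideanSpace ℝ (Fin n) → ℝ) (hf : LSmoothConvex L f)
    (x₀ : EuclideanSpace ℝ (Fin n))
    (x z x' z' : ℝ → EuclideanSpace ℝ (Fin n))
    (hx : ∀ t ∈ Set.Ici (0 : ℝ), HasDerivWithinAt x (x' t) (Set.Ici 0) t)
    (hx' : ContinuousOn x' (Set.Ici 0))
    (hz : ∀ t ∈ Set.Ici (0 : ℝ), HasDerivWithinAt z (z' t) (Set.Ici 0) t)
    (hz' : ContinuousOn z' (Set.Ici 0))
    (hx0 : x 0 = x₀) (hz0 : z 0 = x₀)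
    (hode1 : ∀ t > (0 : ℝ), x' t = ((2 : ℝ) / t) • (z t - x t))
    (hode2 : ∀ t > (0 : ℝ), z' t = -((t / 2) • gradient f (x t)))
    (pstar : EuclideanSpace ℝ (Fin n))
    (hps : pstar ∈ closure (fconjDom f))
    (hmin : ∀ q ∈ closure (fconjDom f), ‖pstar‖ ≤ ‖q‖) :
    (∀ w, ∀ t > (0 : ℝ),
      f (x t) - ⟪pstar, x t⟫_ℝ ≤
        (f w - ⟪pstar, w⟫_ℝ) + 2 * ‖w - x₀‖ ^ 2 / t ^ 2) ∧
    Tendsto (fun t : ℝ => ((f (x t) - ⟪pstar, x t⟫_ℝ : ℝ) : EReal)) atTop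
      (nhds (⨅ y : EuclideanSpace ℝ (Fin n), ((f y - ⟪pstar, y⟫_ℝ : ℝ) : EReal))) := by
  obtain ⟨hc, hd, hlip⟩ := hf
  have hproj : ∀ s : ℝ, ‖pstar‖ ^ 2 ≤ ⟪pstar, gradient f (x s)⟫_ℝ := fun s =>
    my_proj_ineq hps hmin (subset_closure (my_grad_mem_dom hc hd (x s)))
  have key := my_energy ⟨hc, hd, hlip⟩ x₀ x z x' z' hx hz hx0 hz0 hode1 hode2 pstar hproj
  refine ⟨key, ?_⟩
  rw [tendsto_order]
  constructor
  · intro c hc'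
    refine Filter.Eventually.of_forall fun t => lt_of_lt_of_le hc' ?_
    exact iInf_le (fun y : EuclideanSpace ℝ (Fin n) => ((f y - ⟪pstar, y⟫_ℝ : ℝ) : EReal)) (x t)
  · intro c hc'
    obtain ⟨y, hy⟩ := iInf_lt_iff.1 hc'
    rcases eq_or_ne c ⊤ with rfl | hct
    · exact Filter.Eventually.of_forall fun t => EReal.coe_lt_top _
    · have hcb : (⊥ : EReal) < c := lt_of_le_of_lt bot_le hy
      have hcr : ((c.toReal : ℝ) : EReal) = c := EReal.coe_toReal hct hcb.ne'
      rw [← hcr, EReal.coe_lt_coe_iff] at hy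
      have htend : Tendsto (fun t : ℝ => 2 * ‖y - x₀‖ ^ 2 / t ^ 2) atTop (𝓝 0) := by
        have h1 : Tendsto (fun t : ℝ => t ^ 2) atTop atTop :=
          tendsto_pow_atTop two_ne_zero
        have h2 := h1.inv_tendsto_atTop
        have := h2.const_mul (2 * ‖y - x₀‖ ^ 2)
        simpa [div_eq_mul_inv] using this
      have hev : ∀ᶠ t : ℝ in atTop,
          2 * ‖y - x₀‖ ^ 2 / t ^ 2 < c.toReal - (f y - ⟪pstar, y⟫_ℝ) :=
        htend.eventually (eventually_lt_nhds (by linarith))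
      filter_upwards [hev, eventually_gt_atTop (0 : ℝ)] with t h1 h2
      have := key y t h2
      rw [← hcr, EReal.coe_lt_coe_iff]
      linarith
end

section
/- Let f : ℝ^n → ℝ be L-smooth convex, and let (x^(k)) be the accelerated gradient method iterates with parameter sequence (A_k) and initial point x₀. For k ≥ 1 define q^(k) := −Q_k·(x^(k) − x₀), where Q_k := 4A_k / (Σ_{i=1}^{k} A_i(A_i − A_{i−1})). Then: (a) q^(k) ∈ dom f* for every k ≥ 1; (b) if p⋆ ∈ dom f*, then for every k ≥ 1, ‖q^(k) − p⋆‖² ≤ B̃_k·D_f(x₀, p⋆), where B̃_k := 8·((Σ_{i=1}^{k} √A_i·(A_i − A_{i−1})) / (Σ_{i=1}^{k} A_i(A_i − A_{i−1})))². -/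
set_option maxHeartbeats 1000000


open scoped InnerProductSpace
open Filter Topology

section SmoothConvexAux
variable {E : Type*} [NormedAddCommGroup E] [InnerProductSpace ℝ E] [CompleteSpace E]

lemma line_hasDerivAt (f : E → ℝ) (hdiff : Differentiable ℝ f) (a v : E) (t : ℝ) :
    HasDerivAt (fun s : ℝ => f (a + s • v)) ⟪gradient f (a + t • v), v⟫_ℝ t := by
  have h1 : HasDerivAt (fun s : ℝ => a + s • v) v t := by
    simpa using ((hasDerivAt_id t).smul_const v).const_add a
  have h2 : HasFDerivAt f (InnerProductSpace.toDual ℝ E (gradient f (a + t • v))) (a + t • v) :=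
    (hdiff (a + t • v)).hasGradientAt
  simpa [InnerProductSpace.toDual_apply_apply, Function.comp_def] using h2.comp_hasDerivAt t h1

lemma grad_ineq (f : E → ℝ) (hconv : ConvexOn ℝ Set.univ f) (hdiff : Differentiable ℝ f)
    (a b : E) : f a + ⟪gradient f a, b - a⟫_ℝ ≤ f b := by
  set v := b - a with hv
  set g : ℝ → ℝ := fun s : ℝ => f (a + s • v) with hg
  have hder : HasDerivAt g ⟪gradient f a, v⟫_ℝ 0 := by
    simpa using line_hasDerivAt f hdiff a v 0
  have hslope : ∀ t : ℝ, t ∈ Set.Ioc (0:ℝ) 1 → slope g 0 t ≤ f b - f a := by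
    intro t ht
    have h01 : (1 - t) + t = 1 := by ring
    have hcv := hconv.2 (Set.mem_univ a) (Set.mem_univ b)
      (by linarith [ht.1, ht.2] : (0:ℝ) ≤ 1 - t) (le_of_lt ht.1) h01
    simp only [smul_eq_mul] at hcv
    have hab : (1 - t) • a + t • b = a + t • v := by rw [hv]; module
    rw [hab] at hcv
    have hg0 : g 0 = f a := by simp [hg]
    rw [slope_def_field, hg0]
    rw [sub_zero, div_le_iff₀ ht.1]
    simp only [hg]
    nlinarith [hcv]
  have htend : Tendsto (slope g 0) (𝓝[>] 0) (𝓝 ⟪gradient f a, v⟫_ℝ) :=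
    (hasDerivAt_iff_tendsto_slope.1 hder).mono_left
      (nhdsWithin_mono 0 (fun t ht => ne_of_gt ht))
  have : ⟪gradient f a, v⟫_ℝ ≤ f b - f a := by
    refine le_of_tendsto htend ?_
    filter_upwards [Ioc_mem_nhdsGT_of_mem (by norm_num : (0:ℝ) ∈ Set.Ico (0:ℝ) 1)] with t ht
    exact hslope t ht
  linarith

lemma descent_lemma (f : E → ℝ) (hdiff : Differentiable ℝ f) {L : ℝ} (hL : 0 ≤ L)
    (hlip : LipschitzWith (Real.toNNReal L) (fun u => gradient f u)) (a b : E) :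
    f b ≤ f a + ⟪gradient f a, b - a⟫_ℝ + L / 2 * ‖b - a‖ ^ 2 := by
  set v := b - a with hv
  set g' : ℝ → ℝ := fun t => ⟪gradient f (a + t • v), v⟫_ℝ with hg'
  have hgc : Continuous fun u => gradient f u := hlip.continuous
  have hcont : Continuous g' := by
    apply Continuous.inner
    · exact hgc.comp (continuous_const.add (continuous_id.smul continuous_const))
    · exact continuous_const
  have hInt : IntervalIntegrable g' MeasureTheory.volume 0 1 := hcont.intervalIntegrable 0 1
  have heq : ∫ t in (0:ℝ)..1, g' t = f (a + (1:ℝ) • v) - f (a + (0:ℝ) • v) :=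
    intervalIntegral.integral_eq_sub_of_hasDerivAt (a := 0) (b := 1)
      (f := fun s : ℝ => f (a + s • v)) (f' := g')
      (fun t _ => line_hasDerivAt f hdiff a v t) hInt
  have hbound : ∀ t ∈ Set.Icc (0:ℝ) 1, g' t ≤ g' 0 + L * ‖v‖ ^ 2 * t := by
    intro t ht
    have h1 : g' t - g' 0 = ⟪gradient f (a + t • v) - gradient f (a + (0:ℝ) • v), v⟫_ℝ := by
      rw [inner_sub_left]
    have h2 : ⟪gradient f (a + t • v) - gradient f (a + (0:ℝ) • v), v⟫_ℝ ≤
        ‖gradient f (a + t • v) - gradient f (a + (0:ℝ) • v)‖ * ‖v‖ :=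
      real_inner_le_norm _ _
    have h3 : ‖gradient f (a + t • v) - gradient f (a + (0:ℝ) • v)‖ ≤ L * (t * ‖v‖) := by
      have := hlip.dist_le_mul (a + t • v) (a + (0:ℝ) • v)
      rw [dist_eq_norm] at this
      have hd : dist (a + t • v) (a + (0:ℝ) • v) = t * ‖v‖ := by
        rw [dist_eq_norm]
        have : a + t • v - (a + (0:ℝ) • v) = t • v := by module
        rw [this, norm_smul, Real.norm_eq_abs, abs_of_nonneg ht.1]
      rw [hd] at this
      calc ‖gradient f (a + t • v) - gradient f (a + (0:ℝ) • v)‖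
          ≤ (Real.toNNReal L : ℝ) * (t * ‖v‖) := this
        _ = L * (t * ‖v‖) := by rw [Real.coe_toNNReal L hL]
    nlinarith [norm_nonneg v, ht.1, h1, h2, h3]
  have hintle : ∫ t in (0:ℝ)..1, g' t ≤ ∫ t in (0:ℝ)..1, (g' 0 + L * ‖v‖ ^ 2 * t) := by
    apply intervalIntegral.integral_mono_on (by norm_num) hInt
    · exact ((by fun_prop : Continuous fun t : ℝ => g' 0 + L * ‖v‖ ^ 2 * t)).intervalIntegrable 0 1
    · exact hbound
  have hrhs : ∫ t in (0:ℝ)..1, (g' 0 + L * ‖v‖ ^ 2 * t) = g' 0 + L * ‖v‖ ^ 2 / 2 := by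
    rw [intervalIntegral.integral_add (intervalIntegrable_const)
      (((by fun_prop : Continuous fun t : ℝ => L * ‖v‖ ^ 2 * t)).intervalIntegrable 0 1),
      intervalIntegral.integral_const, intervalIntegral.integral_const_mul, integral_id]
    simp; ring
  have hg0 : g' 0 = ⟪gradient f a, v⟫_ℝ := by simp [hg']
  have h5 : f (a + (1:ℝ) • v) = f b := by rw [hv]; norm_num
  have h6 : f (a + (0:ℝ) • v) = f a := by norm_num
  rw [h5, h6] at heq
  rw [hrhs, hg0] at hintle
  rw [heq] at hintle
  linarith

lemma cocoercive (f : E → ℝ) (hconv : ConvexOn ℝ Set.univ f) (hdiff : Differentiable ℝ f)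
    {L : ℝ} (hL : 0 < L)
    (hlip : LipschitzWith (Real.toNNReal L) (fun u => gradient f u)) (a b : E) :
    f a + ⟪gradient f a, b - a⟫_ℝ + 1 / (2 * L) * ‖gradient f b - gradient f a‖ ^ 2 ≤ f b := by
  set h : E := gradient f b - gradient f a with hh
  set c : E := b - (1 / L) • h with hc
  have d1 : f c ≤ f b + ⟪gradient f b, c - b⟫_ℝ + L / 2 * ‖c - b‖ ^ 2 :=
    descent_lemma f hdiff hL.le hlip b c
  have d2 : f a + ⟪gradient f a, c - a⟫_ℝ ≤ f c := grad_ineq f hconv hdiff a c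
  have e1 : c - b = -((1 / L) • h) := by rw [hc]; module
  have e2 : ⟪gradient f b, c - b⟫_ℝ = -(1 / L * ⟪gradient f b, h⟫_ℝ) := by
    rw [e1, inner_neg_right, real_inner_smul_right]
  have e3 : ‖c - b‖ ^ 2 = (1 / L) ^ 2 * ‖h‖ ^ 2 := by
    rw [e1, norm_neg, norm_smul, Real.norm_eq_abs, abs_of_nonneg (by positivity : (0:ℝ) ≤ 1 / L)]
    ring
  have e4 : c - a = (b - a) - (1 / L) • h := by rw [hc]; module
  have e5 : ⟪gradient f a, c - a⟫_ℝ
      = ⟪gradient f a, b - a⟫_ℝ - 1 / L * ⟪gradient f a, h⟫_ℝ := by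
    rw [e4, inner_sub_right, real_inner_smul_right]
  have e6 : ⟪gradient f b, h⟫_ℝ - ⟪gradient f a, h⟫_ℝ = ‖h‖ ^ 2 := by
    rw [← inner_sub_left, ← hh, real_inner_self_eq_norm_sq]
  have e7 : L / 2 * ((1 / L) ^ 2 * ‖h‖ ^ 2) = 1 / (2 * L) * ‖h‖ ^ 2 := by
    field_simp
  have e8 : 1 / L * ⟪gradient f b, h⟫_ℝ - 1 / L * ⟪gradient f a, h⟫_ℝ
      = 1 / L * ‖h‖ ^ 2 := by rw [← mul_sub, e6]
  have e9 : 1 / L * ‖h‖ ^ 2 - 1 / (2 * L) * ‖h‖ ^ 2 = 1 / (2 * L) * ‖h‖ ^ 2 := by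
    field_simp; ring
  rw [e2, e3] at d1
  rw [e5] at d2
  linarith

lemma step_ineq (f : E → ℝ) (hconv : ConvexOn ℝ Set.univ f) (hdiff : Differentiable ℝ f)
    {L : ℝ} (hL : 0 < L) (hlip : LipschitzWith (Real.toNNReal L) (fun u => gradient f u))
    (p : E) (hpg : ∀ u : E, ‖p‖ ^ 2 ≤ ⟪p, gradient f u⟫_ℝ)
    {A A' : ℝ} (hA : 0 ≤ A) (hAA : A < A') (hstep : L * (A' - A) ^ 2 ≤ 4 * A')
    (c : ℝ) (x₀ xx xx' yy zz zz' : E)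
    (hy : yy = xx + ((A' - A) / A') • (zz - xx))
    (hz : zz' = zz - ((A' - A) / 4) • gradient f yy)
    (hx : xx' = (A / A') • xx + ((A' - A) / A') • zz') :
    A' * (f xx' + c - ⟪p, xx'⟫_ℝ) + 2 * ‖zz' - x₀ + (A' / 4) • p‖ ^ 2 ≤
      A * (f xx + c - ⟪p, xx⟫_ℝ) + 2 * ‖zz - x₀ + (A / 4) • p‖ ^ 2
      + (A' - A) * (f x₀ + c - ⟪p, x₀⟫_ℝ) := by
  have hA' : 0 < A' := lt_of_le_of_lt hA hAA
  set g : E := gradient f yy with hg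
  set g' : E := gradient f xx' with hg'
  have hxv : A' • xx' = A • xx + (A' - A) • zz' := by
    rw [hx, smul_add, smul_smul, smul_smul, mul_div_cancel₀ _ hA'.ne',
      mul_div_cancel₀ _ hA'.ne']
  have hyv : A' • yy = A • xx + (A' - A) • zz := by
    rw [hy, smul_add, smul_smul, mul_div_cancel₀ _ hA'.ne', smul_sub]
    module
  have hy_xx' : A' • (yy - xx') = ((A' - A) ^ 2 / 4) • g := by
    have h1 : A' • (yy - xx') = (A' - A) • (zz - zz') := by
      rw [smul_sub, hyv, hxv]; module
    rw [h1, hz]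
    rw [show zz - (zz - ((A' - A) / 4) • g) = ((A' - A) / 4) • g from by module,
      smul_smul]
    congr 1; ring
  -- scalar identities
  have s1 : A' * ⟪g', yy - xx'⟫_ℝ = (A' - A) ^ 2 / 4 * ⟪g', g⟫_ℝ := by
    rw [← real_inner_smul_right, hy_xx', real_inner_smul_right]
  have hcomb : A • (xx - yy) + (A' - A) • (x₀ - yy) = (A' - A) • (x₀ - zz) := by
    have h2 : A • (xx - yy) + (A' - A) • (x₀ - yy)
        = (A • xx + (A' - A) • zz - A' • yy) + (A' - A) • (x₀ - zz) := by module
    rw [h2, hyv]; module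
  have s23 : A * ⟪g, xx - yy⟫_ℝ + (A' - A) * ⟪g, x₀ - yy⟫_ℝ
      = (A' - A) * ⟪g, x₀ - zz⟫_ℝ := by
    rw [← real_inner_smul_right, ← real_inner_smul_right, ← inner_add_right, hcomb,
      real_inner_smul_right]
  have spxx' : A' * ⟪p, xx'⟫_ℝ = A * ⟪p, xx⟫_ℝ + (A' - A) * ⟪p, zz'⟫_ℝ := by
    rw [← real_inner_smul_right, hxv, inner_add_right, real_inner_smul_right,
      real_inner_smul_right]
  have spzz'' : (A' - A) * ⟪p, zz'⟫_ℝ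
      = (A' - A) * ⟪p, zz⟫_ℝ - (A' - A) ^ 2 / 4 * ⟪p, g⟫_ℝ := by
    rw [hz, inner_sub_right, real_inner_smul_right]; ring
  -- also need inner of g with x₀ - zz expanded? no, keep as atom but i23 uses it; fine
  have hw' : zz' - x₀ + (A' / 4) • p
      = (zz - x₀ + (A / 4) • p) + ((A' - A) / 4) • (p - g) := by
    rw [hz]; module
  have hnorm : ‖zz' - x₀ + (A' / 4) • p‖ ^ 2
      = ‖zz - x₀ + (A / 4) • p‖ ^ 2
        + 2 * (((A' - A) / 4) * ⟪zz - x₀ + (A / 4) • p, p - g⟫_ℝ)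
        + ((A' - A) / 4) ^ 2 * ‖p - g‖ ^ 2 := by
    rw [hw', norm_add_sq_real, real_inner_smul_right, norm_smul, Real.norm_eq_abs,
      mul_pow, sq_abs]
  have hipD : (A' - A) * ⟪zz - x₀ + (A / 4) • p, p - g⟫_ℝ
      = (A' - A) * ⟪p, zz⟫_ℝ - (A' - A) * ⟪p, x₀⟫_ℝ + (A' - A) * A / 4 * ‖p‖ ^ 2
        - (A' - A) * ⟪g, zz⟫_ℝ + (A' - A) * ⟪g, x₀⟫_ℝ - (A' - A) * A / 4 * ⟪p, g⟫_ℝ := by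
    simp only [inner_sub_left, inner_add_left, inner_sub_right, real_inner_smul_left]
    rw [real_inner_comm zz p, real_inner_comm x₀ p, real_inner_comm zz g,
      real_inner_comm x₀ g, real_inner_self_eq_norm_sq]
    ring
  have hpg2s : 2 * ((A' - A) / 4) ^ 2 * ‖p - g‖ ^ 2
      = 2 * ((A' - A) / 4) ^ 2 * (‖p‖ ^ 2 - 2 * ⟪p, g⟫_ℝ + ‖g‖ ^ 2) := by
    rw [norm_sub_sq_real]
  have hggs : (A' - A) ^ 2 / 8 * ‖g - g'‖ ^ 2
      = (A' - A) ^ 2 / 8 * (‖g‖ ^ 2 - 2 * ⟪g', g⟫_ℝ + ‖g'‖ ^ 2) := by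
    rw [norm_sub_sq_real, real_inner_comm g g']
  -- expand ⟪g, x₀ - zz⟫ into atoms
  have sgxz : (A' - A) * ⟪g, x₀ - zz⟫_ℝ = (A' - A) * ⟪g, x₀⟫_ℝ - (A' - A) * ⟪g, zz⟫_ℝ := by
    rw [inner_sub_right]; ring
  -- inequalities
  have i1 := cocoercive f hconv hdiff hL hlip xx' yy
  rw [← hg, ← hg'] at i1
  have i1' := mul_le_mul_of_nonneg_left i1 hA'.le
  have i2' := mul_le_mul_of_nonneg_left (grad_ineq f hconv hdiff yy xx) hA
  have i3' := mul_le_mul_of_nonneg_left (grad_ineq f hconv hdiff yy x₀)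
    (by linarith : (0:ℝ) ≤ A' - A)
  rw [← hg] at i2' i3'
  have i4s : (A' - A) * A / 4 * ‖p‖ ^ 2 ≤ (A' - A) * A / 4 * ⟪p, g⟫_ℝ :=
    mul_le_mul_of_nonneg_left (hpg yy)
      (div_nonneg (mul_nonneg (by linarith) hA) (by norm_num))
  have i5s : (A' - A) ^ 2 / 8 * ‖p‖ ^ 2 ≤ (A' - A) ^ 2 / 8 * ‖g'‖ ^ 2 := by
    have h5 : ‖p‖ ^ 2 ≤ ‖g'‖ ^ 2 := by
      nlinarith [hpg xx', real_inner_le_norm p g', norm_nonneg p, norm_nonneg g',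
        sq_nonneg (‖p‖ - ‖g'‖)]
    exact mul_le_mul_of_nonneg_left h5 (by positivity)
  have i6 : (A' - A) ^ 2 / 8 * ‖g - g'‖ ^ 2 ≤ A' * (1 / (2 * L)) * ‖g - g'‖ ^ 2 := by
    have hcoef : (A' - A) ^ 2 / 8 ≤ A' * (1 / (2 * L)) := by
      have h1 : (A' - A) ^ 2 / 8 ≤ A' / (2 * L) :=
        (div_le_div_iff₀ (by norm_num) (by positivity)).2 (by nlinarith)
      have h2 : A' / (2 * L) = A' * (1 / (2 * L)) := by ring
      linarith [h1, h2.le, h2.ge]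
    exact mul_le_mul_of_nonneg_right hcoef (sq_nonneg _)
  rw [hnorm]
  linarith [i1', i2', i3', i4s, i5s, i6, s1, s23, spxx', spzz'', hipD, hpg2s, hggs, sgxz]

end SmoothConvexAux

section FconjAux
variable {n : ℕ} {f : EuclideanSpace ℝ (Fin n) → ℝ}

lemma mem_fconjDom_of_bound {q : EuclideanSpace ℝ (Fin n)} (M : ℝ)
    (h : ∀ u, ⟪q, u⟫_ℝ - f u ≤ M) : q ∈ fconjDom f := by
  have : fconj f q ≤ (M : EReal) := iSup_le fun u => EReal.coe_le_coe_iff.2 (h u)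
  exact lt_of_le_of_lt this (EReal.coe_lt_top M)

lemma fconj_ne_bot (p : EuclideanSpace ℝ (Fin n)) : fconj f p ≠ ⊥ := by
  have h1 : ((⟪p, 0⟫_ℝ - f 0 : ℝ) : EReal) ≤ fconj f p := by
    exact le_iSup (fun x : EuclideanSpace ℝ (Fin n) => ((⟪p, x⟫_ℝ - f x : ℝ) : EReal)) 0
  intro h
  rw [h] at h1
  exact (EReal.bot_lt_coe _).not_ge h1

lemma fconj_bound {p : EuclideanSpace ℝ (Fin n)} (hp : p ∈ fconjDom f) (u : EuclideanSpace ℝ (Fin n)) :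
    ⟪p, u⟫_ℝ - f u ≤ (fconj f p).toReal := by
  have h1 : ((⟪p, u⟫_ℝ - f u : ℝ) : EReal) ≤ fconj f p := by
    exact le_iSup (fun x : EuclideanSpace ℝ (Fin n) => ((⟪p, x⟫_ℝ - f x : ℝ) : EReal)) u
  have h2 : fconj f p = ((fconj f p).toReal : EReal) :=
    (EReal.coe_toReal (ne_of_lt hp) (fconj_ne_bot p)).symm
  rw [h2] at h1
  exact EReal.coe_le_coe_iff.1 h1

lemma fconjDom_convex : Convex ℝ (fconjDom f) := by
  intro p hp q hq a b ha hb hab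
  apply mem_fconjDom_of_bound (a * (fconj f p).toReal + b * (fconj f q).toReal)
  intro u
  have h1 : ⟪a • p + b • q, u⟫_ℝ - f u
      = a * (⟪p, u⟫_ℝ - f u) + b * (⟪q, u⟫_ℝ - f u) := by
    rw [inner_add_left, real_inner_smul_left, real_inner_smul_left]
    linear_combination (f u) * hab
  rw [h1]
  have := fconj_bound hp u
  have := fconj_bound hq u
  have h2 := mul_le_mul_of_nonneg_left (fconj_bound hp u) ha
  have h3 := mul_le_mul_of_nonneg_left (fconj_bound hq u) hb
  linarith

lemma var_ineq (pstar : EuclideanSpace ℝ (Fin n))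
    (hps : pstar ∈ closure (fconjDom f))
    (hmin : ∀ q ∈ closure (fconjDom f), ‖pstar‖ ≤ ‖q‖) :
    ∀ q ∈ closure (fconjDom f), ‖pstar‖ ^ 2 ≤ ⟪pstar, q⟫_ℝ := by
  intro q hq
  have hC : Convex ℝ (closure (fconjDom f)) := fconjDom_convex.closure
  have key : ∀ t : ℝ, 0 < t → t ≤ 1 →
      0 ≤ 2 * t * ⟪pstar, q - pstar⟫_ℝ + t ^ 2 * ‖q - pstar‖ ^ 2 := by
    intro t ht0 ht1
    have hmem : pstar + t • (q - pstar) ∈ closure (fconjDom f) := by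
      have h1 : pstar + t • (q - pstar) = (1 - t) • pstar + t • q := by module
      rw [h1]
      exact hC hps hq (by linarith) ht0.le (by ring)
    have h2 := hmin _ hmem
    have h3 : ‖pstar + t • (q - pstar)‖ ^ 2
        = ‖pstar‖ ^ 2 + 2 * (t * ⟪pstar, q - pstar⟫_ℝ) + t ^ 2 * ‖q - pstar‖ ^ 2 := by
      rw [norm_add_sq_real, real_inner_smul_right, norm_smul, Real.norm_eq_abs, mul_pow, sq_abs]
    nlinarith [h2, norm_nonneg pstar, norm_nonneg (pstar + t • (q - pstar))]
  have hs : 0 ≤ ⟪pstar, q - pstar⟫_ℝ := by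
    by_contra hs
    push_neg at hs
    set s := ⟪pstar, q - pstar⟫_ℝ
    set c := ‖q - pstar‖ ^ 2 with hc
    have hc0 : 0 ≤ c := sq_nonneg _
    have h2 : 0 < min 1 (-s / (c + 1)) :=
      lt_min one_pos (div_pos (by linarith) (by positivity))
    have ht := key (min 1 (-s / (c + 1))) h2 (min_le_left _ _)
    have h1 : min 1 (-s / (c + 1)) ≤ -s / (c + 1) := min_le_right _ _
    set t := min 1 (-s / (c + 1)) with htdef
    have h5 : t * (c + 1) ≤ -s := (le_div_iff₀ (by positivity)).1 h1
    nlinarith [ht, mul_le_mul_of_nonneg_left h5 h2.le,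
      mul_pos h2 (show (0:ℝ) < -s by linarith), sq_nonneg t, h2]
  have h4 : ⟪pstar, q - pstar⟫_ℝ = ⟪pstar, q⟫_ℝ - ‖pstar‖ ^ 2 := by
    rw [inner_sub_right, real_inner_self_eq_norm_sq]
  linarith

lemma grad_mem_fconjDom (hconv : ConvexOn ℝ Set.univ f) (hdiff : Differentiable ℝ f)
    (u : EuclideanSpace ℝ (Fin n)) : gradient f u ∈ fconjDom f := by
  apply mem_fconjDom_of_bound (⟪gradient f u, u⟫_ℝ - f u)
  intro v
  have h := grad_ineq f hconv hdiff u v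
  rw [inner_sub_right] at h
  linarith

end FconjAux

/-- for the accelerated gradient method, with
`Q_k = 4 A_k / Σ_{i=1}^k A_i (A_i − A_{i−1})` and `q^(k) = −Q_k (x^(k) − x₀)`:
(a) `q^(k) ∈ dom f*`; (b) if `p⋆ ∈ dom f*`, `‖q^(k) − p⋆‖² ≤ B̃_k D_f(x₀, p⋆)`, with
`B̃_k = 8 ((Σ_{i=1}^k √A_i (A_i − A_{i−1})) / (Σ_{i=1}^k A_i (A_i − A_{i−1})))²`. -/
theorem stmt19 {n : ℕ} (hn : 1 ≤ n) (L : ℝ) (hL : 0 < L)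
    (f : EuclideanSpace ℝ (Fin n) → ℝ) (hf : LSmoothConvex L f)
    (A : ℕ → ℝ) (hA0 : A 0 = 0) (hAmono : ∀ k, A k < A (k + 1))
    (hAstep : ∀ k, L * (A (k + 1) - A k) ^ 2 ≤ 4 * A (k + 1))
    (x₀ : EuclideanSpace ℝ (Fin n))
    (x y z : ℕ → EuclideanSpace ℝ (Fin n))
    (hx0 : x 0 = x₀) (hz0 : z 0 = x₀)
    (hy : ∀ k, y k = x k + ((A (k + 1) - A k) / A (k + 1)) • (z k - x k))
    (hzs : ∀ k, z (k + 1) = z k - ((A (k + 1) - A k) / 4) • gradient f (y k))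
    (hxs : ∀ k, x (k + 1) =
      (A k / A (k + 1)) • x k + ((A (k + 1) - A k) / A (k + 1)) • z (k + 1))
    (pstar : EuclideanSpace ℝ (Fin n))
    (hps : pstar ∈ closure (fconjDom f))
    (hmin : ∀ q ∈ closure (fconjDom f), ‖pstar‖ ≤ ‖q‖) :
    (∀ k : ℕ, 1 ≤ k →
      -((4 * A k / (∑ i ∈ Finset.Icc 1 k, A i * (A i - A (i - 1)))) •
        (x k - x₀)) ∈ fconjDom f) ∧
    (pstar ∈ fconjDom f → ∀ k : ℕ, 1 ≤ k →
      ‖-((4 * A k / (∑ i ∈ Finset.Icc 1 k, A i * (A i - A (i - 1)))) •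
          (x k - x₀)) - pstar‖ ^ 2 ≤
        (8 * ((∑ i ∈ Finset.Icc 1 k, Real.sqrt (A i) * (A i - A (i - 1))) /
          (∑ i ∈ Finset.Icc 1 k, A i * (A i - A (i - 1)))) ^ 2) *
          dualDiv f x₀ pstar) := by
  obtain ⟨hconv, hdiff, hlip⟩ := hf
  -- basic facts about A
  have hAmono' : StrictMono A := strictMono_nat_of_lt_succ hAmono
  have hAnn : ∀ k, 0 ≤ A k := fun k => hA0 ▸ hAmono'.le_iff_le.2 (Nat.zero_le k)
  have hApos : ∀ k, 1 ≤ k → 0 < A k := fun k hk =>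
    hA0 ▸ hAmono' (Nat.lt_of_lt_of_le Nat.zero_lt_one hk)
  -- reindex the Icc sums to range sums
  have hreindex : ∀ (F : ℕ → ℝ) (k : ℕ),
      ∑ i ∈ Finset.Icc 1 k, F i = ∑ j ∈ Finset.range k, F (j + 1) := by
    intro F k
    induction k with
    | zero => simp
    | succ m ih => rw [Finset.sum_Icc_succ_top (by omega), ih, Finset.sum_range_succ]
  have hSrw : ∀ k : ℕ, (∑ i ∈ Finset.Icc 1 k, A i * (A i - A (i - 1)))
      = ∑ j ∈ Finset.range k, A (j + 1) * (A (j + 1) - A j) := by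
    intro k; rw [hreindex]; exact Finset.sum_congr rfl (fun j _ => by simp
    )
  have hTrw : ∀ k : ℕ, (∑ i ∈ Finset.Icc 1 k, Real.sqrt (A i) * (A i - A (i - 1)))
      = ∑ j ∈ Finset.range k, Real.sqrt (A (j + 1)) * (A (j + 1) - A j) := by
    intro k; rw [hreindex]; exact Finset.sum_congr rfl (fun j _ => by simp
    )
  set SB : ℕ → ℝ := fun k => ∑ j ∈ Finset.range k, A (j + 1) * (A (j + 1) - A j) with hSB
  have hSpos : ∀ k, 1 ≤ k → 0 < SB k := by
    intro k hk
    apply Finset.sum_pos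
    · intro j _
      exact mul_pos (hApos _ (Nat.le_add_left 1 j)) (by linarith [hAmono j])
    · exact Finset.nonempty_range_iff.2 (by omega)
  -- gradient shorthand
  set G : ℕ → EuclideanSpace ℝ (Fin n) := fun j => gradient f (y j) with hG
  -- z recursion solved
  have hzrec : ∀ k, x₀ - z k = ∑ j ∈ Finset.range k, ((A (j + 1) - A j) / 4) • G j := by
    intro k
    induction k with
    | zero => simp [hz0]
    | succ m ih =>
      rw [Finset.sum_range_succ, ← ih, hzs m]
      module
  -- A_{k+1} x_{k+1} = A_k x_k + Δ z_{k+1}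
  have hxv : ∀ k, A (k + 1) • x (k + 1) = A k • x k + (A (k + 1) - A k) • z (k + 1) := by
    intro k
    have hA1 : A (k + 1) ≠ 0 := (hApos (k + 1) (by omega)).ne'
    rw [hxs k, smul_add, smul_smul, smul_smul, mul_div_cancel₀ _ hA1, mul_div_cancel₀ _ hA1]
  -- x displacement as combination of z displacements
  have hxz2 : ∀ k, A k • (x k - x₀)
      = ∑ j ∈ Finset.range k, (A (j + 1) - A j) • (z (j + 1) - x₀) := by
    intro k
    induction k with
    | zero => simp [hA0]
    | succ m ih =>
      rw [Finset.sum_range_succ, ← ih]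
      have h1 := hxv m
      have h2 : A (m + 1) • (x (m + 1) - x₀)
          = A (m + 1) • x (m + 1) - A (m + 1) • x₀ := by module
      rw [h2, h1]
      module
  -- x displacement as combination of gradients
  have hxg : ∀ k, A k • (x₀ - x k)
      = ∑ j ∈ Finset.range k, ((A (j + 1) - A j) * (A k - A j) / 4) • G j := by
    intro k
    induction k with
    | zero => simp [hA0]
    | succ m ih =>
      have h1 : A (m + 1) • (x₀ - x (m + 1))
          = A m • (x₀ - x m) + (A (m + 1) - A m) • (x₀ - z (m + 1)) := by
        have h2 := hxv m
        have h3 : A (m + 1) • (x₀ - x (m + 1))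
            = A (m + 1) • x₀ - A (m + 1) • x (m + 1) := by module
        rw [h3, h2]; module
      rw [h1, ih, hzrec (m + 1), Finset.sum_range_succ, Finset.sum_range_succ,
        smul_add, Finset.smul_sum, ← add_assoc, ← Finset.sum_add_distrib]
      congr 1
      · apply Finset.sum_congr rfl
        intro j _
        rw [smul_smul, ← add_smul]
        congr 1
        ring
      · rw [smul_smul]
        congr 1
        ring
  -- scalar sum identity: ∑ Δ_j (A_k - A_j) = SB k
  have hSsum : ∀ k, ∑ j ∈ Finset.range k, (A (j + 1) - A j) * (A k - A j) = SB k := by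
    intro k
    induction k with
    | zero => simp [hSB]
    | succ m ih =>
      have htel : ∑ j ∈ Finset.range m, (A (j + 1) - A j) = A m - A 0 :=
        Finset.sum_range_sub A m
      rw [Finset.sum_range_succ]
      have hsplit : ∑ j ∈ Finset.range m, (A (j + 1) - A j) * (A (m + 1) - A j)
          = (∑ j ∈ Finset.range m, (A (j + 1) - A j) * (A m - A j))
            + (∑ j ∈ Finset.range m, (A (j + 1) - A j)) * (A (m + 1) - A m) := by
        rw [Finset.sum_mul, ← Finset.sum_add_distrib]
        exact Finset.sum_congr rfl (fun j _ => by ring)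
      rw [hsplit, ih, htel, hA0, hSB]
      simp only []
      rw [Finset.sum_range_succ]
      ring
  -- representation of q as convex combination of gradients
  have hqrep : ∀ k : ℕ, 1 ≤ k →
      -((4 * A k / (∑ j ∈ Finset.range k, A (j + 1) * (A (j + 1) - A j))) • (x k - x₀))
      = ∑ j ∈ Finset.range k, ((A (j + 1) - A j) * (A k - A j)
          / (∑ j ∈ Finset.range k, A (j + 1) * (A (j + 1) - A j))) • G j := by
    intro k hk
    set S := ∑ j ∈ Finset.range k, A (j + 1) * (A (j + 1) - A j) with hSdef
    have h1 : -((4 * A k / S) • (x k - x₀)) = (4 / S) • (A k • (x₀ - x k)) := by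
      rw [smul_smul]
      have h2 : 4 / S * A k = 4 * A k / S := by ring
      rw [h2]
      module
    rw [h1, hxg k, Finset.smul_sum]
    apply Finset.sum_congr rfl
    intro j _
    rw [smul_smul]
    congr 1
    ring
  have parta : ∀ k : ℕ, 1 ≤ k →
      -((4 * A k / (∑ i ∈ Finset.Icc 1 k, A i * (A i - A (i - 1)))) •
        (x k - x₀)) ∈ fconjDom f := by
    intro k hk
    rw [hSrw k, hqrep k hk]
    set S := ∑ j ∈ Finset.range k, A (j + 1) * (A (j + 1) - A j) with hSdef
    have hS0 : 0 < S := hSpos k hk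
    set lam : ℕ → ℝ := fun j => (A (j + 1) - A j) * (A k - A j) / S with hlam
    have hlamnn : ∀ j, j < k → 0 ≤ lam j := by
      intro j hj
      have h3 : A j ≤ A k := hAmono'.le_iff_le.2 (le_of_lt hj)
      have h4 := hAmono j
      exact div_nonneg (mul_nonneg (by linarith) (by linarith)) hS0.le
    have hlamsum : ∑ j ∈ Finset.range k, lam j = 1 := by
      rw [hlam]
      simp only []
      rw [← Finset.sum_div, hSsum k, div_self hS0.ne']
    apply mem_fconjDom_of_bound
      (∑ j ∈ Finset.range k, lam j * (⟪G j, y j⟫_ℝ - f (y j)))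
    intro u
    have hinner : ⟪∑ j ∈ Finset.range k, lam j • G j, u⟫_ℝ
        = ∑ j ∈ Finset.range k, lam j * ⟪G j, u⟫_ℝ := by
      rw [sum_inner]
      exact Finset.sum_congr rfl fun j _ => real_inner_smul_left _ _ _
    have hsplit : ∑ j ∈ Finset.range k, lam j * (⟪G j, u⟫_ℝ - f u)
        = (∑ j ∈ Finset.range k, lam j * ⟪G j, u⟫_ℝ)
          - (∑ j ∈ Finset.range k, lam j) * f u := by
      rw [Finset.sum_mul, ← Finset.sum_sub_distrib]
      exact Finset.sum_congr rfl fun j _ => by ring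
    have hterm : ∀ j ∈ Finset.range k,
        lam j * (⟪G j, u⟫_ℝ - f u) ≤ lam j * (⟪G j, y j⟫_ℝ - f (y j)) := by
      intro j hj
      apply mul_le_mul_of_nonneg_left ?_ (hlamnn j (Finset.mem_range.1 hj))
      have h5 := grad_ineq f hconv hdiff (y j) u
      rw [inner_sub_right] at h5
      have h6 : (G j) = gradient f (y j) := rfl
      rw [h6]
      linarith
    calc ⟪∑ j ∈ Finset.range k, lam j • G j, u⟫_ℝ - f u
        = ∑ j ∈ Finset.range k, lam j * (⟪G j, u⟫_ℝ - f u) := by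
          rw [hsplit, hinner, hlamsum, one_mul]
      _ ≤ ∑ j ∈ Finset.range k, lam j * (⟪G j, y j⟫_ℝ - f (y j)) :=
          Finset.sum_le_sum hterm
  refine ⟨parta, ?_⟩
  -- Part (b)
  intro hpd k hk
  rw [hSrw k, hTrw k]
  set S := ∑ j ∈ Finset.range k, A (j + 1) * (A (j + 1) - A j) with hSdef
  have hS0 : 0 < S := hSpos k hk
  set c : ℝ := (fconj f pstar).toReal with hc
  set D : ℝ := dualDiv f x₀ pstar with hD
  have hDeq : D = f x₀ + c - ⟪pstar, x₀⟫_ℝ := rfl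
  have hD0 : 0 ≤ D := by
    have h1 := fconj_bound hpd x₀
    rw [hDeq]; linarith
  have hpg : ∀ u : EuclideanSpace ℝ (Fin n), ‖pstar‖ ^ 2 ≤ ⟪pstar, gradient f u⟫_ℝ :=
    fun u => var_ineq pstar hps hmin _ (subset_closure (grad_mem_fconjDom hconv hdiff u))
  set Φ : ℕ → ℝ := fun m => A m * (f (x m) + c - ⟪pstar, x m⟫_ℝ)
      + 2 * ‖z m - x₀ + (A m / 4) • pstar‖ ^ 2 with hPhi
  have hstepPhi : ∀ m : ℕ, Φ (m + 1) ≤ Φ m + (A (m + 1) - A m) * (f x₀ + c - ⟪pstar, x₀⟫_ℝ) :=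
    fun m => step_ineq f hconv hdiff hL hlip pstar hpg (hAnn m) (hAmono m) (hAstep m) c
      x₀ (x m) (x (m + 1)) (y m) (z m) (z (m + 1)) (hy m) (hzs m) (hxs m)
  have hPhile : ∀ m, Φ m ≤ A m * D := by
    intro m
    induction m with
    | zero =>
      have h0 : Φ 0 = 0 := by simp [hPhi, hA0, hz0]
      rw [h0, hA0]
      simp
    | succ j ihj =>
      have h1 := hstepPhi j
      rw [← hDeq] at h1
      nlinarith [h1, ihj]
  have hwnorm : ∀ m, ‖z m - x₀ + (A m / 4) • pstar‖
      ≤ Real.sqrt (A m) * Real.sqrt D / Real.sqrt 2 := by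
    intro m
    have h1 := hPhile m
    have h2 : 0 ≤ f (x m) + c - ⟪pstar, x m⟫_ℝ := by
      have h3 := fconj_bound hpd (x m)
      linarith
    have h4 : 2 * ‖z m - x₀ + (A m / 4) • pstar‖ ^ 2 ≤ A m * D := by
      simp only [hPhi] at h1
      nlinarith [h1, mul_nonneg (hAnn m) h2]
    have hrhs : 0 ≤ Real.sqrt (A m) * Real.sqrt D / Real.sqrt 2 := by positivity
    have hsq : (Real.sqrt (A m) * Real.sqrt D / Real.sqrt 2) ^ 2 = A m * D / 2 := by
      rw [div_pow, mul_pow, Real.sq_sqrt (hAnn m), Real.sq_sqrt hD0,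
        Real.sq_sqrt (by norm_num : (0:ℝ) ≤ 2)]
    nlinarith [h4, hsq, hrhs, norm_nonneg (z m - x₀ + (A m / 4) • pstar)]
  have hsum1 : ∑ j ∈ Finset.range k,
        (A (j + 1) - A j) • (z (j + 1) - x₀ + (A (j + 1) / 4) • pstar)
      = A k • (x k - x₀) + (S / 4) • pstar := by
    have h1 : ∀ j ∈ Finset.range k, (A (j + 1) - A j) • (z (j + 1) - x₀ + (A (j + 1) / 4) • pstar)
        = (A (j + 1) - A j) • (z (j + 1) - x₀) + (A (j + 1) * (A (j + 1) - A j) / 4) • pstar := by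
      intro j _
      rw [smul_add, smul_smul]
      congr 2
      ring
    rw [Finset.sum_congr rfl h1, Finset.sum_add_distrib, ← hxz2 k, ← Finset.sum_smul]
    congr 2
    rw [← Finset.sum_div]
  have hqp : -((4 * A k / S) • (x k - x₀)) - pstar
      = (-(4 / S)) • (∑ j ∈ Finset.range k,
          (A (j + 1) - A j) • (z (j + 1) - x₀ + (A (j + 1) / 4) • pstar)) := by
    rw [hsum1, smul_add, smul_smul, smul_smul]
    have e1 : -(4 / S) * A k = -(4 * A k / S) := by ring
    have e2 : -(4 / S) * (S / 4) = -1 := by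
      field_simp
    rw [e1, e2]
    module
  have hnormle : ‖-((4 * A k / S) • (x k - x₀)) - pstar‖
      ≤ (4 / S) * ∑ j ∈ Finset.range k,
          (A (j + 1) - A j) * (Real.sqrt (A (j + 1)) * Real.sqrt D / Real.sqrt 2) := by
    rw [hqp, norm_smul, Real.norm_eq_abs, abs_neg,
      abs_of_nonneg (by positivity : (0:ℝ) ≤ 4 / S)]
    apply mul_le_mul_of_nonneg_left ?_ (by positivity)
    calc ‖∑ j ∈ Finset.range k,
            (A (j + 1) - A j) • (z (j + 1) - x₀ + (A (j + 1) / 4) • pstar)‖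
        ≤ ∑ j ∈ Finset.range k,
            ‖(A (j + 1) - A j) • (z (j + 1) - x₀ + (A (j + 1) / 4) • pstar)‖ :=
          norm_sum_le _ _
      _ = ∑ j ∈ Finset.range k,
            (A (j + 1) - A j) * ‖z (j + 1) - x₀ + (A (j + 1) / 4) • pstar‖ := by
          apply Finset.sum_congr rfl
          intro j _
          rw [norm_smul, Real.norm_eq_abs, abs_of_nonneg (by linarith [hAmono j] : (0:ℝ) ≤ A (j + 1) - A j)]
      _ ≤ ∑ j ∈ Finset.range k,
            (A (j + 1) - A j) * (Real.sqrt (A (j + 1)) * Real.sqrt D / Real.sqrt 2) := by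
          apply Finset.sum_le_sum
          intro j _
          exact mul_le_mul_of_nonneg_left (hwnorm (j + 1)) (by linarith [hAmono j])
  set T := ∑ j ∈ Finset.range k, Real.sqrt (A (j + 1)) * (A (j + 1) - A j) with hT
  have hTnn : 0 ≤ T := by
    apply Finset.sum_nonneg
    intro j _
    exact mul_nonneg (Real.sqrt_nonneg _) (by linarith [hAmono j])
  have hsum2 : ∑ j ∈ Finset.range k,
        (A (j + 1) - A j) * (Real.sqrt (A (j + 1)) * Real.sqrt D / Real.sqrt 2)
      = T * (Real.sqrt D / Real.sqrt 2) := by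
    rw [hT, Finset.sum_mul]
    exact Finset.sum_congr rfl fun j _ => by ring
  rw [hsum2] at hnormle
  have hfin : ((4 / S) * (T * (Real.sqrt D / Real.sqrt 2))) ^ 2 = 8 * (T / S) ^ 2 * D := by
    have h2 : (Real.sqrt 2) ^ 2 = 2 := Real.sq_sqrt (by norm_num)
    have hDsq : (Real.sqrt D) ^ 2 = D := Real.sq_sqrt hD0
    rw [mul_pow, mul_pow, div_pow, div_pow, div_pow, hDsq, h2]
    field_simp
    ring
  have hfinal := pow_le_pow_left₀ (norm_nonneg _) hnormle 2
  rw [hfin] at hfinal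
  calc ‖-((4 * A k / S) • (x k - x₀)) - pstar‖ ^ 2 ≤ 8 * (T / S) ^ 2 * D := hfinal
    _ = 8 * (T / S) ^ 2 * dualDiv f x₀ pstar := by rw [hD]
end
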